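/- Assume the eigenvalues of Ã are pairwise distinct (λ̃_1 > ⋯ > λ̃_d) and λ̃_r > 0. Let Ψ ∈ ℝ^{r×r} be orthogonal and let X = O^B (Λ^B)^{-1/2} O^Ã_{:,{1,…,r}} Ψ. Then the null space {V ∈ ℝ^{d×r} : q_X(V) = 0} of the positive semidefinite Hessian of ℓ at X is a linear subspace of dimension r(r−1)/2 (equivalently, rank(H_X) = d·r − r(r−1)/2); it consists exactly of the matrices V = X S with S ∈ ℝ^{r×r} skew-symmetric. -/

import Mathlib

open Matrix

/-- `ℓ(X) = L(X, XᵀAX) = -2 tr(XᵀAX) + tr((XᵀAX)(XᵀBX))`. -/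
noncomputable def gevEll (d r : ℕ) (A B : Matrix (Fin d) (Fin d) ℝ)
    (X : Matrix (Fin d) (Fin r) ℝ) : ℝ :=
  -2 * (Xᵀ * A * X).trace + ((Xᵀ * A * X) * (Xᵀ * B * X)).trace

/-- `q_X(V)`: the quadratic form of the Hessian `H_X` of `ℓ` at `X`, i.e. the second
derivative at `t = 0` of `t ↦ ℓ(X + tV)`. -/
noncomputable def gevHessQuad (d r : ℕ) (A B : Matrix (Fin d) (Fin d) ℝ)
    (X V : Matrix (Fin d) (Fin r) ℝ) : ℝ :=
  iteratedDeriv 2 (fun t : ℝ => gevEll d r A B (X + t • V)) 0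


lemma quarticDeriv (c0 c1 c2 c3 c4 : ℝ) :
    iteratedDeriv 2 (fun t : ℝ => c0 + c1*t + c2*t^2 + c3*t^3 + c4*t^4) 0 = 2*c2 := by
  have hd : ∀ x : ℝ, HasDerivAt (fun t : ℝ => c0 + c1*t + c2*t^2 + c3*t^3 + c4*t^4)
      (c1 + 2*c2*x + 3*c3*x^2 + 4*c4*x^3) x := by
    intro x
    have h0 : HasDerivAt (fun _ : ℝ => c0) 0 x := hasDerivAt_const x c0
    have h1 : HasDerivAt (fun t : ℝ => c1*t) c1 x := by
      simpa using (hasDerivAt_id x).const_mul c1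
    have h2 : HasDerivAt (fun t : ℝ => c2*t^2) (c2*(2*x^1)) x :=
      (hasDerivAt_pow 2 x).const_mul c2
    have h3 : HasDerivAt (fun t : ℝ => c3*t^3) (c3*(3*x^2)) x :=
      (hasDerivAt_pow 3 x).const_mul c3
    have h4 : HasDerivAt (fun t : ℝ => c4*t^4) (c4*(4*x^3)) x :=
      (hasDerivAt_pow 4 x).const_mul c4
    have := (((h0.add h1).add h2).add h3).add h4
    exact this.congr_deriv (by ring)
  have hderiv : deriv (fun t : ℝ => c0 + c1*t + c2*t^2 + c3*t^3 + c4*t^4)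
      = fun x : ℝ => c1 + 2*c2*x + 3*c3*x^2 + 4*c4*x^3 := funext fun x => (hd x).deriv
  have hd2 : HasDerivAt (fun x : ℝ => c1 + 2*c2*x + 3*c3*x^2 + 4*c4*x^3) (2*c2) 0 := by
    have h0 : HasDerivAt (fun _ : ℝ => c1) 0 (0:ℝ) := hasDerivAt_const 0 c1
    have h1 : HasDerivAt (fun t : ℝ => 2*c2*t) (2*c2) (0:ℝ) := by
      simpa using (hasDerivAt_id (0:ℝ)).const_mul (2*c2)
    have h2 : HasDerivAt (fun t : ℝ => 3*c3*t^2) (3*c3*(2*(0:ℝ)^1)) (0:ℝ) :=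
      (hasDerivAt_pow 2 (0:ℝ)).const_mul (3*c3)
    have h3 : HasDerivAt (fun t : ℝ => 4*c4*t^3) (4*c4*(3*(0:ℝ)^2)) (0:ℝ) :=
      (hasDerivAt_pow 3 (0:ℝ)).const_mul (4*c4)
    have := ((h0.add h1).add h2).add h3
    exact this.congr_deriv (by ring)
  rw [show (2:ℕ) = 1 + 1 from rfl, iteratedDeriv_succ, iteratedDeriv_one, hderiv]
  exact hd2.deriv



lemma gevExpand (d r : ℕ) (A B : Matrix (Fin d) (Fin d) ℝ)
    (X V : Matrix (Fin d) (Fin r) ℝ) (t : ℝ) :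
    gevEll d r A B (X + t • V) =
      (-2 * (Xᵀ*A*X).trace + ((Xᵀ*A*X)*(Xᵀ*B*X)).trace)
      + (-2*((Xᵀ*A*V).trace + (Vᵀ*A*X).trace)
          + (((Xᵀ*A*V)*(Xᵀ*B*X)).trace + ((Vᵀ*A*X)*(Xᵀ*B*X)).trace
            + ((Xᵀ*A*X)*(Xᵀ*B*V)).trace + ((Xᵀ*A*X)*(Vᵀ*B*X)).trace)) * t
      + (-2 * (Vᵀ*A*V).trace + ((Xᵀ*A*X)*(Vᵀ*B*V)).trace
          + (((Xᵀ*A*V) + (Vᵀ*A*X))*((Xᵀ*B*V) + (Vᵀ*B*X))).trace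
          + ((Vᵀ*A*V)*(Xᵀ*B*X)).trace) * t^2
      + ((((Xᵀ*A*V) + (Vᵀ*A*X))*(Vᵀ*B*V)).trace
          + ((Vᵀ*A*V)*((Xᵀ*B*V) + (Vᵀ*B*X))).trace) * t^3
      + ((Vᵀ*A*V)*(Vᵀ*B*V)).trace * t^4 := by
  simp only [gevEll, transpose_add, transpose_smul, Matrix.add_mul, Matrix.mul_add, Matrix.smul_mul,
    Matrix.mul_smul, trace_add, trace_smul, smul_eq_mul, smul_smul]
  ring



def skewSubmodule (r : ℕ) : Submodule ℝ (Matrix (Fin r) (Fin r) ℝ) where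
  carrier := {S | Sᵀ = -S}
  add_mem' := fun {a b} ha hb => by
    simp only [Set.mem_setOf_eq] at *
    rw [transpose_add, ha, hb, neg_add]
  zero_mem' := by simp
  smul_mem' := fun c {a} ha => by
    simp only [Set.mem_setOf_eq] at *
    rw [transpose_smul, ha, smul_neg]

lemma mem_skewSubmodule (r : ℕ) (S : Matrix (Fin r) (Fin r) ℝ) :
    S ∈ skewSubmodule r ↔ Sᵀ = -S := Iff.rfl

lemma card_ltPairs (r : ℕ) :
    Fintype.card {p : Fin r × Fin r // p.1 < p.2} = r * (r - 1) / 2 := by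
  have eqv : {p : Fin r × Fin r // p.1 < p.2} ≃ (Σ j : Fin r, Fin j.val) :=
    { toFun := fun p => ⟨p.1.2, ⟨p.1.1.val, p.2⟩⟩
      invFun := fun s => ⟨(⟨s.2.val, lt_trans s.2.isLt s.1.isLt⟩, s.1), s.2.isLt⟩
      left_inv := fun p => rfl
      right_inv := fun s => rfl }
  rw [Fintype.card_congr eqv, Fintype.card_sigma]
  simp only [Fintype.card_fin]
  rw [Fin.sum_univ_eq_sum_range (fun i => i) r]
  exact Finset.sum_range_id r

noncomputable def skewEquiv (r : ℕ) :
    skewSubmodule r ≃ₗ[ℝ] ({p : Fin r × Fin r // p.1 < p.2} → ℝ) where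
  toFun := fun S p => (S : Matrix (Fin r) (Fin r) ℝ) p.1.1 p.1.2
  map_add' := fun a b => rfl
  map_smul' := fun c a => rfl
  invFun := fun gf =>
    ⟨Matrix.of fun i j =>
        if h : i < j then gf ⟨(i, j), h⟩ else if h' : j < i then -gf ⟨(j, i), h'⟩ else 0, by
      rw [mem_skewSubmodule]
      ext i j
      rcases lt_trichotomy i j with h | h | h
      · simp [transpose_apply, h, not_lt_of_gt h, h.ne']
      · simp [transpose_apply, h]
      · simp [transpose_apply, h, not_lt_of_gt h, h.ne']⟩
  left_inv := fun S => by
    apply Subtype.ext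
    ext i j
    have hskew := (mem_skewSubmodule r S).mp S.2
    rcases lt_trichotomy i j with h | h | h
    · simp [h]
    · subst h
      have : (S : Matrix (Fin r) (Fin r) ℝ) i i = -(S : Matrix (Fin r) (Fin r) ℝ) i i := by
        conv_lhs => rw [← transpose_apply (S : Matrix (Fin r) (Fin r) ℝ) i i]
        rw [hskew]; rfl
      simp only [Matrix.of_apply, lt_irrefl, dif_neg, not_lt]
      simp
      linarith
    · have hval : (S : Matrix (Fin r) (Fin r) ℝ) j i = -(S : Matrix (Fin r) (Fin r) ℝ) i j := by
        conv_lhs => rw [← transpose_apply (S : Matrix (Fin r) (Fin r) ℝ) i j]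
        rw [hskew]; rfl
      simp [not_lt_of_gt h, h, hval]
  right_inv := fun gf => by
    funext p
    simp [p.2]

lemma finrank_skewSubmodule (r : ℕ) :
    Module.finrank ℝ (skewSubmodule r) = r * (r - 1) / 2 := by
  rw [(skewEquiv r).finrank_eq, Module.finrank_fintype_fun_eq_card, card_ltPairs]

/-- If the eigenvalues of `Ã` are pairwise distinct
(`λ̃_1 > ⋯ > λ̃_d`, i.e. `lam` is strictly antitone) and `λ̃_r > 0`, then at
`X = O^B (Λ^B)^{-1/2} O^Ã_{:,{1,…,r}} Ψ` the null space `{V : q_X(V) = 0}` of the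
positive semidefinite Hessian of `ℓ` is a linear subspace of dimension `r(r−1)/2`
(equivalently `rank H_X = d·r − r(r−1)/2`), consisting exactly of the matrices
`V = X S` with `S` skew-symmetric. -/
theorem gev_stable_equilibrium_hessian_nullspace
    (d r : ℕ) (hd : 1 ≤ d) (hr : 1 ≤ r) (hrd : r ≤ d)
    (A B : Matrix (Fin d) (Fin d) ℝ) (hA : Aᵀ = A) (hB : B.PosDef)
    (OB : Matrix (Fin d) (Fin d) ℝ) (hOB : OBᵀ * OB = 1)
    (μ : Fin d → ℝ) (hμ : ∀ k, 0 < μ k)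
    (hBdec : B = OB * diagonal μ * OBᵀ)
    (OA : Matrix (Fin d) (Fin d) ℝ) (hOA : OAᵀ * OA = 1)
    (lam : Fin d → ℝ) (hlam : StrictAnti lam)
    (hpos : 0 < lam ⟨r - 1, by omega⟩)
    (hAdec : diagonal (fun k => (Real.sqrt (μ k))⁻¹) * OBᵀ * A * OB *
        diagonal (fun k => (Real.sqrt (μ k))⁻¹) = OA * diagonal lam * OAᵀ)
    (Ψ : Matrix (Fin r) (Fin r) ℝ) (hΨ : Ψᵀ * Ψ = 1)
    (X : Matrix (Fin d) (Fin r) ℝ)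
    (hX : X = OB * diagonal (fun k => (Real.sqrt (μ k))⁻¹) *
        OA.submatrix id (Fin.castLE hrd) * Ψ) :
    ∃ N : Submodule ℝ (Matrix (Fin d) (Fin r) ℝ),
      (∀ V, V ∈ N ↔ gevHessQuad d r A B X V = 0) ∧
      (∀ V, V ∈ N ↔ ∃ S : Matrix (Fin r) (Fin r) ℝ, Sᵀ = -S ∧ V = X * S) ∧
      Module.finrank ℝ N = r * (r - 1) / 2 := by
  set Dμ : Matrix (Fin d) (Fin d) ℝ := diagonal (fun k => (Real.sqrt (μ k))⁻¹) with hDμ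
  set Dσ : Matrix (Fin d) (Fin d) ℝ := diagonal (fun k => Real.sqrt (μ k)) with hDσ
  have hsqrt_ne : ∀ k, Real.sqrt (μ k) ≠ 0 := fun k => (Real.sqrt_pos.mpr (hμ k)).ne'
  have hDσμ : Dσ * Dμ = 1 := by
    rw [hDσ, hDμ, diagonal_mul_diagonal]
    have : (fun k => Real.sqrt (μ k) * (Real.sqrt (μ k))⁻¹) = fun _ : Fin d => (1:ℝ) :=
      funext fun k => mul_inv_cancel₀ (hsqrt_ne k)
    rw [show (fun i => Real.sqrt (μ i) * (Real.sqrt (μ i))⁻¹) = fun _ : Fin d => (1:ℝ) from this, diagonal_one]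
  have hDμσ : Dμ * Dσ = 1 := mul_eq_one_comm.mp hDσμ
  have hDμμDμ : Dμ * diagonal μ * Dμ = 1 := by
    rw [hDμ, diagonal_mul_diagonal, diagonal_mul_diagonal]
    have hfun : (fun i => (Real.sqrt (μ i))⁻¹ * μ i * (Real.sqrt (μ i))⁻¹)
        = fun _ : Fin d => (1:ℝ) := by
      funext k
      have hms : Real.sqrt (μ k) * Real.sqrt (μ k) = μ k := Real.mul_self_sqrt (hμ k).le
      nth_rewrite 2 [← hms]; field_simp; exact div_self (hsqrt_ne k)
    rw [hfun, diagonal_one]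
  have hDμt : Dμᵀ = Dμ := by rw [hDμ]; exact diagonal_transpose _
  have hOA' : OA * OAᵀ = 1 := mul_eq_one_comm.mp hOA
  have hOB' : OB * OBᵀ = 1 := mul_eq_one_comm.mp hOB
  set G : Matrix (Fin d) (Fin d) ℝ := OB * Dμ * OA with hG
  set Gi : Matrix (Fin d) (Fin d) ℝ := OAᵀ * Dσ * OBᵀ with hGi
  have hGiG : Gi * G = 1 := by
    rw [hGi, hG]
    calc OAᵀ * Dσ * OBᵀ * (OB * Dμ * OA) = OAᵀ * (Dσ * ((OBᵀ * OB) * Dμ)) * OA := by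
          simp only [Matrix.mul_assoc]
      _ = 1 := by rw [hOB, Matrix.one_mul, hDσμ, Matrix.mul_one, hOA]
  have hGGi : G * Gi = 1 := mul_eq_one_comm.mp hGiG
  have hGAG : Gᵀ * A * G = diagonal lam := by
    have h1 : Gᵀ = OAᵀ * (Dμ * OBᵀ) := by
      rw [hG]; simp [transpose_mul, Matrix.mul_assoc, hDμt]
    calc Gᵀ * A * G = OAᵀ * (Dμ * OBᵀ * A * OB * Dμ) * OA := by
          rw [h1, hG]; simp only [Matrix.mul_assoc]
      _ = OAᵀ * (OA * diagonal lam * OAᵀ) * OA := by rw [hAdec]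
      _ = diagonal lam := by
          calc OAᵀ * (OA * diagonal lam * OAᵀ) * OA
              = (OAᵀ * OA) * diagonal lam * (OAᵀ * OA) := by simp only [Matrix.mul_assoc]
            _ = diagonal lam := by rw [hOA, Matrix.one_mul, Matrix.mul_one]
  have hGBG : Gᵀ * B * G = 1 := by
    have h1 : Gᵀ = OAᵀ * (Dμ * OBᵀ) := by
      rw [hG]; simp [transpose_mul, Matrix.mul_assoc, hDμt]
    calc Gᵀ * B * G = OAᵀ * (Dμ * ((OBᵀ * OB) * (diagonal μ * ((OBᵀ * OB) * Dμ)))) * OA := by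
          rw [h1, hG, hBdec]; simp only [Matrix.mul_assoc]
      _ = OAᵀ * (Dμ * diagonal μ * Dμ) * OA := by
          rw [hOB, Matrix.one_mul, Matrix.one_mul]; simp only [Matrix.mul_assoc]
      _ = 1 := by rw [hDμμDμ, Matrix.mul_one, hOA]
  -- chunk 2
  set e : Fin r → Fin d := Fin.castLE hrd with he
  have hrdlt : ∀ j : Fin r, (j : ℕ) < d := fun j => lt_of_lt_of_le j.isLt hrd
  set E : Matrix (Fin d) (Fin r) ℝ := Matrix.of (fun k j => if k = e j then (1:ℝ) else 0) with hE
  have hEapp : ∀ k j, E k j = if k = e j then (1:ℝ) else 0 := fun k j => rfl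
  have heinj : Function.Injective e := fun a b hab => by
    rw [he] at hab; exact Fin.castLE_injective hrd hab
  have hsub : OA.submatrix id e = OA * E := by
    ext i j
    simp [mul_apply, hEapp, mul_ite]
  have hEtW : ∀ (W : Matrix (Fin d) (Fin r) ℝ) (i j : Fin r), (Eᵀ * W) i j = W (e i) j := by
    intro W i j
    simp [mul_apply, transpose_apply, hEapp, ite_mul]
  have hWtE : ∀ (W : Matrix (Fin d) (Fin r) ℝ) (i j : Fin r), (Wᵀ * E) i j = W (e j) i := by
    intro W i j
    simp [mul_apply, transpose_apply, hEapp, mul_ite]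
  have hΛW : ∀ (W : Matrix (Fin d) (Fin r) ℝ) (k : Fin d) (j : Fin r),
      (diagonal lam * W) k j = lam k * W k j := by
    intro W k j
    rw [diagonal_mul]
  have hEtE : Eᵀ * E = 1 := by
    ext i j
    rw [hEtW]
    simp [hEapp, heinj.eq_iff, Matrix.one_apply, eq_comm]
  have hEtΛE : Eᵀ * (diagonal lam * E) = diagonal (fun j => lam (e j)) := by
    ext i j
    rw [hEtW, hΛW, hEapp]
    by_cases h : i = j <;> simp [diagonal, h, heinj.eq_iff]
  -- chunk 3
  have hΨ' : Ψ * Ψᵀ = 1 := mul_eq_one_comm.mp hΨ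
  have hXG : X = G * (E * Ψ) := by
    rw [hX, hsub, hG]
    simp only [Matrix.mul_assoc, he]
  have cancelA : ∀ (x : Matrix (Fin d) (Fin r) ℝ), Gᵀ * (A * (G * x)) = diagonal lam * x := by
    intro x
    calc Gᵀ * (A * (G * x)) = (Gᵀ * A * G) * x := by simp only [Matrix.mul_assoc]
      _ = diagonal lam * x := by rw [hGAG]
  have cancelB : ∀ (x : Matrix (Fin d) (Fin r) ℝ), Gᵀ * (B * (G * x)) = x := by
    intro x
    calc Gᵀ * (B * (G * x)) = (Gᵀ * B * G) * x := by simp only [Matrix.mul_assoc]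
      _ = x := by rw [hGBG, Matrix.one_mul]
  have keyA : ∀ P Q : Matrix (Fin d) (Fin r) ℝ,
      (G * (P * Ψ))ᵀ * A * (G * (Q * Ψ)) = Ψᵀ * ((Pᵀ * (diagonal lam * Q)) * Ψ) := by
    intro P Q
    calc (G * (P * Ψ))ᵀ * A * (G * (Q * Ψ))
        = Ψᵀ * (Pᵀ * (Gᵀ * (A * (G * (Q * Ψ))))) := by
          simp only [transpose_mul, Matrix.mul_assoc]
      _ = Ψᵀ * (Pᵀ * (diagonal lam * (Q * Ψ))) := by rw [cancelA]
      _ = Ψᵀ * ((Pᵀ * (diagonal lam * Q)) * Ψ) := by simp only [Matrix.mul_assoc]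
  have keyB : ∀ P Q : Matrix (Fin d) (Fin r) ℝ,
      (G * (P * Ψ))ᵀ * B * (G * (Q * Ψ)) = Ψᵀ * ((Pᵀ * Q) * Ψ) := by
    intro P Q
    calc (G * (P * Ψ))ᵀ * B * (G * (Q * Ψ))
        = Ψᵀ * (Pᵀ * (Gᵀ * (B * (G * (Q * Ψ))))) := by
          simp only [transpose_mul, Matrix.mul_assoc]
      _ = Ψᵀ * (Pᵀ * (Q * Ψ)) := by rw [cancelB]
      _ = Ψᵀ * ((Pᵀ * Q) * Ψ) := by simp only [Matrix.mul_assoc]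
  have traceConj : ∀ M : Matrix (Fin r) (Fin r) ℝ, (Ψᵀ * (M * Ψ)).trace = M.trace := by
    intro M
    rw [Matrix.trace_mul_comm, Matrix.mul_assoc, hΨ', Matrix.mul_one]
  have traceConj2 : ∀ M N : Matrix (Fin r) (Fin r) ℝ,
      ((Ψᵀ * (M * Ψ)) * (Ψᵀ * (N * Ψ))).trace = (M * N).trace := by
    intro M N
    have : (Ψᵀ * (M * Ψ)) * (Ψᵀ * (N * Ψ)) = Ψᵀ * ((M * N) * Ψ) := by
      calc (Ψᵀ * (M * Ψ)) * (Ψᵀ * (N * Ψ)) = Ψᵀ * (M * ((Ψ * Ψᵀ) * (N * Ψ))) := by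
            simp only [Matrix.mul_assoc]
        _ = Ψᵀ * ((M * N) * Ψ) := by rw [hΨ', Matrix.one_mul, Matrix.mul_assoc]
    rw [this, traceConj]
  -- chunk 4
  have hVU : ∀ V : Matrix (Fin d) (Fin r) ℝ, V = G * ((Gi * (V * Ψᵀ)) * Ψ) := by
    intro V
    calc V = (G * Gi) * V * (Ψᵀ * Ψ) := by rw [hGGi, hΨ, Matrix.one_mul, Matrix.mul_one]
      _ = G * ((Gi * (V * Ψᵀ)) * Ψ) := by simp only [Matrix.mul_assoc]
  have hstep : ∀ U : Matrix (Fin d) (Fin r) ℝ,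
      -2 * ((G*(U*Ψ))ᵀ*A*(G*(U*Ψ))).trace
      + ((Xᵀ*A*X)*((G*(U*Ψ))ᵀ*B*(G*(U*Ψ)))).trace
      + (((Xᵀ*A*(G*(U*Ψ))) + ((G*(U*Ψ))ᵀ*A*X))*((Xᵀ*B*(G*(U*Ψ))) + ((G*(U*Ψ))ᵀ*B*X))).trace
      + (((G*(U*Ψ))ᵀ*A*(G*(U*Ψ)))*(Xᵀ*B*X)).trace
      = -2 * (Uᵀ*(diagonal lam*U)).trace
      + ((Eᵀ*(diagonal lam*E))*(Uᵀ*U)).trace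
      + (((Eᵀ*(diagonal lam*U)) + (Uᵀ*(diagonal lam*E)))*((Eᵀ*U) + (Uᵀ*E))).trace
      + ((Uᵀ*(diagonal lam*U))*(Eᵀ*E)).trace := by
    intro U
    rw [hXG]
    simp only [keyA, keyB]
    simp only [← Matrix.mul_add, ← Matrix.add_mul]
    simp only [traceConj2, traceConj]
  -- chunk 5
  have traceMulEntries : ∀ {n m : ℕ} (M : Matrix (Fin n) (Fin m) ℝ) (N : Matrix (Fin m) (Fin n) ℝ),
      (M*N).trace = ∑ i, ∑ j, M i j * N j i := by
    intro n m M N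
    simp [Matrix.trace, Matrix.diag, mul_apply]
  have hUΛE : ∀ (W : Matrix (Fin d) (Fin r) ℝ) (i j : Fin r),
      (Wᵀ * (diagonal lam * E)) i j = lam (e j) * W (e j) i := by
    intro W i j
    simp only [mul_apply, transpose_apply, hΛW, hEapp, mul_ite, mul_one, mul_zero]
    simp [Matrix.diagonal_apply, Finset.sum_ite_eq', mul_comm]
  have G1 : ∀ U : Matrix (Fin d) (Fin r) ℝ,
      (Uᵀ*(diagonal lam*U)).trace = ∑ j : Fin r, ∑ k : Fin d, lam k * (U k j)^2 := by
    intro U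
    rw [traceMulEntries]
    refine Finset.sum_congr rfl fun j _ => Finset.sum_congr rfl fun k _ => ?_
    rw [transpose_apply, hΛW]; ring
  have G2 : ∀ U : Matrix (Fin d) (Fin r) ℝ,
      ((Eᵀ*(diagonal lam*E))*(Uᵀ*U)).trace = ∑ j : Fin r, ∑ k : Fin d, lam (e j) * (U k j)^2 := by
    intro U
    rw [hEtΛE, traceMulEntries]
    refine Finset.sum_congr rfl fun j _ => ?_
    rw [Finset.sum_eq_single j]
    · rw [diagonal_apply_eq, mul_apply, Finset.mul_sum]
      refine Finset.sum_congr rfl fun k _ => ?_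
      rw [transpose_apply]; ring
    · intro b _ hbj
      rw [diagonal_apply_ne _ (Ne.symm hbj), zero_mul]
    · intro h; exact absurd (Finset.mem_univ j) h
  have G4 : ∀ U : Matrix (Fin d) (Fin r) ℝ,
      (((Eᵀ*(diagonal lam*U)) + (Uᵀ*(diagonal lam*E)))*((Eᵀ*U) + (Uᵀ*E))).trace
      = ∑ i : Fin r, ∑ j : Fin r, (lam (e i) * U (e i) j + lam (e j) * U (e j) i)
          * (U (e j) i + U (e i) j) := by
    intro U
    rw [traceMulEntries]
    refine Finset.sum_congr rfl fun i _ => Finset.sum_congr rfl fun j _ => ?_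
    rw [Matrix.add_apply, Matrix.add_apply, hEtW, hΛW, hUΛE, hEtW, hWtE]
  -- chunk 6
  have hsplit : ∀ f : Fin d → ℝ,
      ∑ k : Fin d, f k = (∑ i : Fin r, f (e i)) + ∑ k : Fin d, (if r ≤ (k:ℕ) then f k else 0) := by
    intro f
    have h1 : ∀ k : Fin d, f k = (if (k:ℕ) < r then f k else 0) + (if r ≤ (k:ℕ) then f k else 0) := by
      intro k
      by_cases h : (k:ℕ) < r
      · rw [if_pos h, if_neg (by omega)]; ring
      · rw [if_neg h, if_pos (by omega)]; ring
    rw [Finset.sum_congr rfl (fun k _ => h1 k), Finset.sum_add_distrib]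
    congr 1
    rw [← Finset.sum_filter]
    have himg : Finset.univ.filter (fun k : Fin d => (k:ℕ) < r) = Finset.univ.image e := by
      ext k
      simp only [Finset.mem_filter, Finset.mem_univ, true_and, Finset.mem_image]
      constructor
      · intro h; exact ⟨⟨(k:ℕ), h⟩, Fin.ext rfl⟩
      · rintro ⟨i, rfl⟩; exact i.isLt
    rw [himg, Finset.sum_image (fun a _ b _ hab => heinj hab)]
  have hhalf : ∀ C : Fin r → Fin r → ℝ,
      ∑ i, ∑ j, C i j = (1/2) * ∑ i, ∑ j, (C i j + C j i) := by
    intro C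
    have h2 : (∑ i : Fin r, ∑ j : Fin r, (C i j + C j i))
        = (∑ i : Fin r, ∑ j : Fin r, C i j) + (∑ i : Fin r, ∑ j : Fin r, C j i) := by
      rw [← Finset.sum_add_distrib]
      exact Finset.sum_congr rfl fun i _ => Finset.sum_add_distrib
    have h3 : (∑ i : Fin r, ∑ j : Fin r, C j i) = ∑ i : Fin r, ∑ j : Fin r, C i j :=
      Finset.sum_comm
    rw [h2, h3]; ring
  have hformula : ∀ U : Matrix (Fin d) (Fin r) ℝ,
      -2 * (∑ j : Fin r, ∑ k : Fin d, lam k * (U k j)^2)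
      + (∑ j : Fin r, ∑ k : Fin d, lam (e j) * (U k j)^2)
      + (∑ i : Fin r, ∑ j : Fin r, (lam (e i) * U (e i) j + lam (e j) * U (e j) i)
          * (U (e j) i + U (e i) j))
      + (∑ j : Fin r, ∑ k : Fin d, lam k * (U k j)^2)
      = (∑ j : Fin r, ∑ k : Fin d, if r ≤ (k:ℕ) then (lam (e j) - lam k) * (U k j)^2 else 0)
      + (1/2) * ∑ i : Fin r, ∑ j : Fin r,
          (lam (e i) + lam (e j)) * (U (e i) j + U (e j) i)^2 := by
    intro U
    have hcomb : -2 * (∑ j : Fin r, ∑ k : Fin d, lam k * (U k j)^2)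
        + (∑ j : Fin r, ∑ k : Fin d, lam (e j) * (U k j)^2)
        + (∑ j : Fin r, ∑ k : Fin d, lam k * (U k j)^2)
        = ∑ j : Fin r, ∑ k : Fin d, (lam (e j) - lam k) * (U k j)^2 := by
      have h4 : (∑ j : Fin r, ∑ k : Fin d, (lam (e j) - lam k) * (U k j)^2)
          = (∑ j : Fin r, ∑ k : Fin d, lam (e j) * (U k j)^2)
            - (∑ j : Fin r, ∑ k : Fin d, lam k * (U k j)^2) := by
        rw [← Finset.sum_sub_distrib]
        refine Finset.sum_congr rfl fun j _ => ?_
        rw [← Finset.sum_sub_distrib]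
        exact Finset.sum_congr rfl fun k _ => by ring
      rw [h4]; ring
    have hsplit2 : (∑ j : Fin r, ∑ k : Fin d, (lam (e j) - lam k) * (U k j)^2)
        = (∑ j : Fin r, ∑ i : Fin r, (lam (e j) - lam (e i)) * (U (e i) j)^2)
          + ∑ j : Fin r, ∑ k : Fin d,
              (if r ≤ (k:ℕ) then (lam (e j) - lam k) * (U k j)^2 else 0) := by
      rw [← Finset.sum_add_distrib]
      exact Finset.sum_congr rfl fun j _ =>
        hsplit (fun k => (lam (e j) - lam k) * (U k j)^2)
    have hswap : (∑ j : Fin r, ∑ i : Fin r, (lam (e j) - lam (e i)) * (U (e i) j)^2)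
        = ∑ i : Fin r, ∑ j : Fin r, (lam (e j) - lam (e i)) * (U (e i) j)^2 :=
      Finset.sum_comm
    have hsym : (∑ i : Fin r, ∑ j : Fin r, (lam (e j) - lam (e i)) * (U (e i) j)^2)
        + (∑ i : Fin r, ∑ j : Fin r, (lam (e i) * U (e i) j + lam (e j) * U (e j) i)
            * (U (e j) i + U (e i) j))
        = (1/2) * ∑ i : Fin r, ∑ j : Fin r,
            (lam (e i) + lam (e j)) * (U (e i) j + U (e j) i)^2 := by
      have hC : (∑ i : Fin r, ∑ j : Fin r, (lam (e j) - lam (e i)) * (U (e i) j)^2)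
          + (∑ i : Fin r, ∑ j : Fin r, (lam (e i) * U (e i) j + lam (e j) * U (e j) i)
              * (U (e j) i + U (e i) j))
          = ∑ i : Fin r, ∑ j : Fin r, ((lam (e j) - lam (e i)) * (U (e i) j)^2
              + (lam (e i) * U (e i) j + lam (e j) * U (e j) i) * (U (e j) i + U (e i) j)) := by
        rw [← Finset.sum_add_distrib]
        exact Finset.sum_congr rfl fun i _ => Finset.sum_add_distrib.symm
      rw [hC, hhalf]
      congr 1
      refine Finset.sum_congr rfl fun i _ => Finset.sum_congr rfl fun j _ => ?_
      ring
    calc -2 * (∑ j : Fin r, ∑ k : Fin d, lam k * (U k j)^2)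
        + (∑ j : Fin r, ∑ k : Fin d, lam (e j) * (U k j)^2)
        + (∑ i : Fin r, ∑ j : Fin r, (lam (e i) * U (e i) j + lam (e j) * U (e j) i)
            * (U (e j) i + U (e i) j))
        + (∑ j : Fin r, ∑ k : Fin d, lam k * (U k j)^2)
        = (∑ j : Fin r, ∑ k : Fin d, (lam (e j) - lam k) * (U k j)^2)
          + (∑ i : Fin r, ∑ j : Fin r, (lam (e i) * U (e i) j + lam (e j) * U (e j) i)
              * (U (e j) i + U (e i) j)) := by rw [← hcomb]; ring
      _ = (∑ j : Fin r, ∑ k : Fin d,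
              (if r ≤ (k:ℕ) then (lam (e j) - lam k) * (U k j)^2 else 0))
          + ((∑ i : Fin r, ∑ j : Fin r, (lam (e j) - lam (e i)) * (U (e i) j)^2)
            + (∑ i : Fin r, ∑ j : Fin r, (lam (e i) * U (e i) j + lam (e j) * U (e j) i)
                * (U (e j) i + U (e i) j))) := by rw [hsplit2, hswap]; ring
      _ = _ := by rw [hsym]
  -- chunk 7
  have hlr_pos : ∀ j : Fin r, 0 < lam (e j) := by
    intro j
    have hle : (e j) ≤ (⟨r - 1, by omega⟩ : Fin d) := by
      rw [he]; simp only [Fin.le_def, Fin.coe_castLE]; omega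
    exact lt_of_lt_of_le hpos (hlam.antitone hle)
  have hdiff_pos : ∀ (j : Fin r) (k : Fin d), r ≤ (k:ℕ) → 0 < lam (e j) - lam k := by
    intro j k hk
    have : (e j) < k := by rw [he]; simp only [Fin.lt_def, Fin.coe_castLE]; omega
    exact sub_pos.mpr (hlam this)
  have sum2zero : ∀ {n m : ℕ} (f : Fin n → Fin m → ℝ), (∀ a b, 0 ≤ f a b) →
      ((∑ a, ∑ b, f a b) = 0 ↔ ∀ a b, f a b = 0) := by
    intro n m f hf
    rw [Finset.sum_eq_zero_iff_of_nonneg (fun a _ => Finset.sum_nonneg fun b _ => hf a b)]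
    constructor
    · intro h a b
      exact (Finset.sum_eq_zero_iff_of_nonneg (fun b _ => hf a b)).mp
        (h a (Finset.mem_univ a)) b (Finset.mem_univ b)
    · intro h a _
      exact Finset.sum_eq_zero fun b _ => h a b
  have hzeroiff : ∀ U : Matrix (Fin d) (Fin r) ℝ,
      ((∑ j : Fin r, ∑ k : Fin d, if r ≤ (k:ℕ) then (lam (e j) - lam k) * (U k j)^2 else 0)
        + (1/2) * ∑ i : Fin r, ∑ j : Fin r,
            (lam (e i) + lam (e j)) * (U (e i) j + U (e j) i)^2 = 0)
      ↔ ((∀ (k : Fin d) (j : Fin r), r ≤ (k:ℕ) → U k j = 0)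
          ∧ ∀ i j : Fin r, U (e i) j + U (e j) i = 0) := by
    intro U
    have hnn1 : ∀ (j : Fin r) (k : Fin d),
        0 ≤ (if r ≤ (k:ℕ) then (lam (e j) - lam k) * (U k j)^2 else 0) := by
      intro j k
      by_cases h : r ≤ (k:ℕ)
      · rw [if_pos h]; exact mul_nonneg (hdiff_pos j k h).le (sq_nonneg _)
      · rw [if_neg h]
    have hnn2 : ∀ i j : Fin r, 0 ≤ (lam (e i) + lam (e j)) * (U (e i) j + U (e j) i)^2 :=
      fun i j => mul_nonneg (by have := hlr_pos i; have := hlr_pos j; linarith) (sq_nonneg _)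
    have hS1 : 0 ≤ ∑ j : Fin r, ∑ k : Fin d,
        if r ≤ (k:ℕ) then (lam (e j) - lam k) * (U k j)^2 else 0 :=
      Finset.sum_nonneg fun j _ => Finset.sum_nonneg fun k _ => hnn1 j k
    have hS2 : 0 ≤ ∑ i : Fin r, ∑ j : Fin r,
        (lam (e i) + lam (e j)) * (U (e i) j + U (e j) i)^2 :=
      Finset.sum_nonneg fun i _ => Finset.sum_nonneg fun j _ => hnn2 i j
    rw [add_eq_zero_iff_of_nonneg hS1 (by linarith)]
    constructor
    · rintro ⟨h1, h2⟩
      have h1' := (sum2zero _ hnn1).mp h1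
      have h2' : ∑ i : Fin r, ∑ j : Fin r,
          (lam (e i) + lam (e j)) * (U (e i) j + U (e j) i)^2 = 0 := by linarith
      have h2'' := (sum2zero _ hnn2).mp h2'
      constructor
      · intro k j hk
        have := h1' j k
        rw [if_pos hk] at this
        have hsq : (U k j)^2 = 0 := by
          rcases mul_eq_zero.mp this with h | h
          · exact absurd h (hdiff_pos j k hk).ne'
          · exact h
        exact pow_eq_zero_iff (by norm_num) |>.mp hsq
      · intro i j
        have := h2'' i j
        have hpos' : 0 < lam (e i) + lam (e j) := by
          have := hlr_pos i; have := hlr_pos j; linarith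
        have hsq : (U (e i) j + U (e j) i)^2 = 0 := by
          rcases mul_eq_zero.mp this with h | h
          · exact absurd h hpos'.ne'
          · exact h
        exact pow_eq_zero_iff (by norm_num) |>.mp hsq
    · rintro ⟨h1, h2⟩
      constructor
      · exact (sum2zero _ hnn1).mpr fun j k => by
          by_cases h : r ≤ (k:ℕ)
          · rw [if_pos h, h1 k j h]; ring
          · rw [if_neg h]
      · have : ∑ i : Fin r, ∑ j : Fin r,
            (lam (e i) + lam (e j)) * (U (e i) j + U (e j) i)^2 = 0 :=
          (sum2zero _ hnn2).mpr fun i j => by rw [h2 i j]; ring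
        rw [this]; ring
  -- chunk 8
  have hETapp : ∀ (T : Matrix (Fin r) (Fin r) ℝ) (k : Fin d) (j : Fin r),
      (E * T) k j = if h : (k:ℕ) < r then T ⟨(k:ℕ), h⟩ j else 0 := by
    intro T k j
    by_cases h : (k:ℕ) < r
    · rw [dif_pos h]
      have hiff : ∀ i : Fin r, (k = e i) ↔ ((⟨(k:ℕ), h⟩ : Fin r) = i) := by
        intro i
        constructor
        · intro hh; exact Fin.ext (show (k:ℕ) = (i:ℕ) from congrArg Fin.val hh)
        · intro hh; exact Fin.ext (show (k:ℕ) = (i:ℕ) from congrArg Fin.val hh)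
      simp only [mul_apply, hEapp, hiff, ite_mul, one_mul, zero_mul]
      rw [Finset.sum_ite_eq Finset.univ (⟨(k:ℕ), h⟩ : Fin r) (fun i => T i j)]
      simp
    · rw [dif_neg h, mul_apply]
      apply Finset.sum_eq_zero
      intro i _
      have hne : k ≠ e i := by
        intro hke
        rw [he] at hke
        have : (k:ℕ) = (i:ℕ) := by rw [hke]; rfl
        omega
      simp [hEapp, hne]
  have hETe : ∀ (T : Matrix (Fin r) (Fin r) ℝ) (i j : Fin r), (E * T) (e i) j = T i j := by
    intro T i j
    rw [hETapp]
    have h : ((e i : Fin d) : ℕ) < r := by rw [he]; exact i.isLt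
    rw [dif_pos h]
    have hii : (⟨((e i : Fin d):ℕ), h⟩ : Fin r) = i := Fin.ext rfl
    rw [hii]
  have hcond_iff : ∀ V : Matrix (Fin d) (Fin r) ℝ,
      ((∀ (k : Fin d) (j : Fin r), r ≤ (k:ℕ) → (Gi * (V * Ψᵀ)) k j = 0)
        ∧ ∀ i j : Fin r, (Gi * (V * Ψᵀ)) (e i) j + (Gi * (V * Ψᵀ)) (e j) i = 0)
      ↔ ∃ S : Matrix (Fin r) (Fin r) ℝ, Sᵀ = -S ∧ V = X * S := by
    intro V
    constructor
    · rintro ⟨h1, h2⟩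
      set U : Matrix (Fin d) (Fin r) ℝ := Gi * (V * Ψᵀ) with hU
      set S₀ : Matrix (Fin r) (Fin r) ℝ := Eᵀ * U with hS₀
      have hS₀app : ∀ i j, S₀ i j = U (e i) j := fun i j => hEtW U i j
      have hS₀skew : S₀ᵀ = -S₀ := by
        ext i j
        rw [transpose_apply, Matrix.neg_apply, hS₀app, hS₀app]
        have := h2 i j
        linarith
      have hUES : U = E * S₀ := by
        ext k j
        rw [hETapp]
        by_cases h : (k:ℕ) < r
        · rw [dif_pos h, hS₀app]
          have hek : e ⟨(k:ℕ), h⟩ = k := Fin.ext rfl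
          rw [hek]
        · rw [dif_neg h]
          exact h1 k j (by omega)
      refine ⟨Ψᵀ * (S₀ * Ψ), ?_, ?_⟩
      · rw [transpose_mul, transpose_mul, transpose_transpose, hS₀skew]
        simp [Matrix.mul_neg, Matrix.neg_mul, Matrix.mul_assoc]
      · calc V = G * (U * Ψ) := hVU V
          _ = G * ((E * S₀) * Ψ) := by rw [← hUES]
          _ = G * (E * ((Ψ * Ψᵀ) * (S₀ * Ψ))) := by
              rw [hΨ', Matrix.one_mul]; simp only [Matrix.mul_assoc]
          _ = (G * (E * Ψ)) * (Ψᵀ * (S₀ * Ψ)) := by simp only [Matrix.mul_assoc]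
          _ = X * (Ψᵀ * (S₀ * Ψ)) := by rw [← hXG]
    · rintro ⟨S, hSskew, rfl⟩
      have hGiXS : Gi * ((X * S) * Ψᵀ) = E * (Ψ * (S * Ψᵀ)) := by
        rw [hXG]
        calc Gi * (((G * (E * Ψ)) * S) * Ψᵀ) = (Gi * G) * (E * (Ψ * (S * Ψᵀ))) := by
              simp only [Matrix.mul_assoc]
          _ = E * (Ψ * (S * Ψᵀ)) := by rw [hGiG, Matrix.one_mul]
      have hTskew : (Ψ * (S * Ψᵀ))ᵀ = -(Ψ * (S * Ψᵀ)) := by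
        rw [transpose_mul, transpose_mul, transpose_transpose, hSskew]
        simp [Matrix.mul_neg, Matrix.neg_mul, Matrix.mul_assoc]
      constructor
      · intro k j hk
        rw [hGiXS, hETapp, dif_neg (by omega)]
      · intro i j
        rw [hGiXS, hETe, hETe]
        have h := congrFun (congrFun hTskew i) j
        rw [transpose_apply, Matrix.neg_apply] at h
        linarith
  -- chunk 9
  have hquad : ∀ V : Matrix (Fin d) (Fin r) ℝ, gevHessQuad d r A B X V
      = 2 * (-2 * (Vᵀ*A*V).trace + ((Xᵀ*A*X)*(Vᵀ*B*V)).trace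
        + (((Xᵀ*A*V) + (Vᵀ*A*X))*((Xᵀ*B*V) + (Vᵀ*B*X))).trace
        + ((Vᵀ*A*V)*(Xᵀ*B*X)).trace) := by
    intro V
    have hfun : (fun t : ℝ => gevEll d r A B (X + t • V))
        = fun t : ℝ => (-2 * (Xᵀ*A*X).trace + ((Xᵀ*A*X)*(Xᵀ*B*X)).trace)
          + (-2*((Xᵀ*A*V).trace + (Vᵀ*A*X).trace)
              + (((Xᵀ*A*V)*(Xᵀ*B*X)).trace + ((Vᵀ*A*X)*(Xᵀ*B*X)).trace
                + ((Xᵀ*A*X)*(Xᵀ*B*V)).trace + ((Xᵀ*A*X)*(Vᵀ*B*X)).trace)) * t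
          + (-2 * (Vᵀ*A*V).trace + ((Xᵀ*A*X)*(Vᵀ*B*V)).trace
              + (((Xᵀ*A*V) + (Vᵀ*A*X))*((Xᵀ*B*V) + (Vᵀ*B*X))).trace
              + ((Vᵀ*A*V)*(Xᵀ*B*X)).trace) * t^2
          + ((((Xᵀ*A*V) + (Vᵀ*A*X))*(Vᵀ*B*V)).trace
              + ((Vᵀ*A*V)*((Xᵀ*B*V) + (Vᵀ*B*X))).trace) * t^3
          + ((Vᵀ*A*V)*(Vᵀ*B*V)).trace * t^4 := funext fun t => gevExpand d r A B X V t
    simp only [gevHessQuad]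
    rw [hfun]
    exact quarticDeriv _ _ _ _ _
  have hqval : ∀ V : Matrix (Fin d) (Fin r) ℝ, gevHessQuad d r A B X V
      = 2 * ((∑ j : Fin r, ∑ k : Fin d,
            if r ≤ (k:ℕ) then (lam (e j) - lam k) * ((Gi * (V * Ψᵀ)) k j)^2 else 0)
          + (1/2) * ∑ i : Fin r, ∑ j : Fin r, (lam (e i) + lam (e j))
              * ((Gi * (V * Ψᵀ)) (e i) j + (Gi * (V * Ψᵀ)) (e j) i)^2) := by
    intro V
    obtain ⟨U, hV⟩ : ∃ U, V = G * (U * Ψ) := ⟨_, hVU V⟩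
    have hUV : Gi * (V * Ψᵀ) = U := by
      rw [hV]
      calc Gi * ((G * (U * Ψ)) * Ψᵀ) = (Gi * G) * (U * (Ψ * Ψᵀ)) := by
            simp only [Matrix.mul_assoc]
        _ = U := by rw [hGiG, hΨ', Matrix.one_mul, Matrix.mul_one]
    rw [hquad V, hUV]
    conv_lhs => rw [hV]
    rw [hstep U]
    simp only [hEtE, Matrix.mul_one]
    rw [G1, G2, G4]
    rw [hformula U]
  have hmain : ∀ V : Matrix (Fin d) (Fin r) ℝ,
      gevHessQuad d r A B X V = 0 ↔ ∃ S : Matrix (Fin r) (Fin r) ℝ, Sᵀ = -S ∧ V = X * S := by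
    intro V
    rw [hqval V]
    have h2 : ∀ y : ℝ, 2 * y = 0 ↔ y = 0 := fun y => by
      constructor
      · intro h; linarith
      · intro h; rw [h]; ring
    rw [h2]
    exact (hzeroiff _).trans (hcond_iff V)
  set f : Matrix (Fin r) (Fin r) ℝ →ₗ[ℝ] Matrix (Fin d) (Fin r) ℝ :=
    { toFun := fun S => X * S
      map_add' := fun a b => Matrix.mul_add X a b
      map_smul' := fun c a => Matrix.mul_smul X c a } with hf
  have hmem : ∀ V, V ∈ Submodule.map f (skewSubmodule r)
      ↔ ∃ S : Matrix (Fin r) (Fin r) ℝ, Sᵀ = -S ∧ V = X * S := by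
    intro V
    rw [Submodule.mem_map]
    constructor
    · rintro ⟨S, hS, rfl⟩
      exact ⟨S, hS, rfl⟩
    · rintro ⟨S, hS, rfl⟩
      exact ⟨S, hS, rfl⟩
  refine ⟨Submodule.map f (skewSubmodule r), fun V => (hmem V).trans (hmain V).symm, hmem, ?_⟩
  have hXleft : (Ψᵀ * (Eᵀ * Gi)) * X = 1 := by
    rw [hXG]
    calc (Ψᵀ * (Eᵀ * Gi)) * (G * (E * Ψ)) = Ψᵀ * (Eᵀ * ((Gi * G) * (E * Ψ))) := by
          simp only [Matrix.mul_assoc]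
      _ = Ψᵀ * ((Eᵀ * E) * Ψ) := by
          rw [hGiG, Matrix.one_mul]; simp only [Matrix.mul_assoc]
      _ = 1 := by rw [hEtE, Matrix.one_mul, hΨ]
  have hcancel : ∀ S : Matrix (Fin r) (Fin r) ℝ, (Ψᵀ * (Eᵀ * Gi)) * (X * S) = S := by
    intro S
    rw [← Matrix.mul_assoc, hXleft, Matrix.one_mul]
  have hinj : Function.Injective f := by
    intro S S' h
    have h' : X * S = X * S' := h
    have h2 := congrArg (fun M => (Ψᵀ * (Eᵀ * Gi)) * M) h'
    simpa only [hcancel] using h2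
  rw [← (Submodule.equivMapOfInjective f hinj (skewSubmodule r)).finrank_eq]
  exact finrank_skewSubmodule r
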